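/- For any D-formula F, the QFLIA formula ⟦F⟧ produced by the recursive reduction is equivalent to F: an integer assignment satisfies F (under the intended table semantics) if and only if it satisfies ⟦F⟧. -/
import Mathlib


namespace DLogic

/-- Integer terms of the logic D (rows are flattened into tuples of integers;
`col d i` is de Bruijn-style access to column `i` of the row bound by the
`d`-th enclosing selection). -/
inductive Term : Type
  | var : ℕ → Term
  | col : ℕ → ℕ → Term
  | const : ℤ → Term
  | add : Term → Term → Term
  | mul : ℤ → Term → Term

mutual
  /-- Table expressions of D. -/
  inductive Table : Type
    | input : List (List Term) → Table
    | sel : Formula → Table → Table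
    | prod : Table → Table → Table
    | union : Table → Table → Table
  /-- Formulas of D. -/
  inductive Formula : Type
    | le : Term → Term → Formula
    | nonempty : Table → Formula
    | not : Formula → Formula
    | or : Formula → Formula → Formula
end

def Term.eval (env : ℕ → ℤ) (stk : List (List ℤ)) : Term → ℤ
  | .var n => env n
  | .col d i => (stk.getD d []).getD i 0
  | .const k => k
  | .add a b => a.eval env stk + b.eval env stk
  | .mul k t => k * t.eval env stk

mutual
  /-- The finite set (list) of rows denoted by a table expression. -/
  def Table.eval (env : ℕ → ℤ) (stk : List (List ℤ)) : Table → List (List ℤ)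
    | .input rows => rows.map (fun r => r.map (fun t => t.eval env stk))
    | .sel F D => (D.eval env stk).filter (fun r => F.eval env (r :: stk))
    | .prod D₁ D₂ =>
        (D₁.eval env stk).flatMap (fun r₁ => (D₂.eval env stk).map (fun r₂ => r₁ ++ r₂))
    | .union D₁ D₂ => D₁.eval env stk ++ D₂.eval env stk
  /-- Truth value of a D formula. -/
  def Formula.eval (env : ℕ → ℤ) (stk : List (List ℤ)) : Formula → Bool
    | .le t₁ t₂ => decide (t₁.eval env stk ≤ t₂.eval env stk)
    | .nonempty D => !(D.eval env stk).isEmpty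
    | .not F => !(F.eval env stk)
    | .or F₁ F₂ => F₁.eval env stk || F₂.eval env stk
end

/-- Satisfiability of a D formula. -/
def Satisfiable (F : Formula) : Prop := ∃ env : ℕ → ℤ, F.eval env [] = true

end DLogic

namespace DLogic

/- The guarded-row reduction ⟦·⟧: a table expression is represented as a
finite list of guarded rows `(r, b)` (the row `r` is present iff the guard
`b` holds); `⟦σx.F(D)⟧` conjoins `⟦F[x/r]⟧` to each guard, `⟦D₁ × D₂⟧`
takes pairwise products with conjoined guards, `⟦D₁ ∪ D₂⟧` is the union,
and `⟦∃̇D⟧` is the disjunction of the guards. -/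
mutual
  def Table.red (env : ℕ → ℤ) (stk : List (List ℤ)) : Table → List (List ℤ × Bool)
    | .input rows => rows.map (fun r => (r.map (fun t => t.eval env stk), true))
    | .sel F D => (D.red env stk).map (fun rb => (rb.1, rb.2 && F.red env (rb.1 :: stk)))
    | .prod D₁ D₂ =>
        (D₁.red env stk).flatMap (fun rb₁ =>
          (D₂.red env stk).map (fun rb₂ => (rb₁.1 ++ rb₂.1, rb₁.2 && rb₂.2)))
    | .union D₁ D₂ => D₁.red env stk ++ D₂.red env stk
  def Formula.red (env : ℕ → ℤ) (stk : List (List ℤ)) : Formula → Bool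
    | .le t₁ t₂ => decide (t₁.eval env stk ≤ t₂.eval env stk)
    | .nonempty D => (D.red env stk).any (fun rb => rb.2)
    | .not F => !(F.red env stk)
    | .or F₁ F₂ => F₁.red env stk || F₂.red env stk
end

end DLogic

namespace DLogic

private def guard' : List ℤ × Bool → Option (List ℤ) :=
  fun rb => if rb.2 then some rb.1 else none

private lemma filterMap_guard_map_sel (l : List (List ℤ × Bool)) (p : List ℤ → Bool) :
    (l.map (fun rb => (rb.1, rb.2 && p rb.1))).filterMap guard'
      = (l.filterMap guard').filter p := by
  induction l with
  | nil => rfl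
  | cons rb t ih =>
      rcases rb with ⟨r, b⟩
      cases b <;> cases h : p r <;>
        simp_all [guard', List.filterMap_cons, List.filter_cons]

private lemma filterMap_guard_map_pair (r : List ℤ) (l : List (List ℤ × Bool)) :
    (l.map (fun rb₂ => (r ++ rb₂.1, rb₂.2))).filterMap guard'
      = (l.filterMap guard').map (fun r₂ => r ++ r₂) := by
  induction l with
  | nil => rfl
  | cons rb t ih =>
      rcases rb with ⟨r₂, b⟩
      cases b <;> simp_all [guard', List.filterMap_cons]

private lemma filterMap_guard_prod (l₁ l₂ : List (List ℤ × Bool)) :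
    (l₁.flatMap (fun rb₁ => l₂.map (fun rb₂ => (rb₁.1 ++ rb₂.1, rb₁.2 && rb₂.2)))).filterMap
        guard'
      = (l₁.filterMap guard').flatMap (fun r₁ =>
          (l₂.filterMap guard').map (fun r₂ => r₁ ++ r₂)) := by
  induction l₁ with
  | nil => rfl
  | cons rb t ih =>
      rcases rb with ⟨r, b⟩
      cases b with
      | false =>
          have : (l₂.map (fun rb₂ => (r ++ rb₂.1, false))).filterMap guard' = [] := by
            induction l₂ with
            | nil => rfl
            | cons a s ihs => simp [guard', List.filterMap_cons, ihs]
          simp_all [guard', List.filterMap_cons, List.filterMap_append]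
      | true =>
          simp only [List.flatMap_cons, List.filterMap_append, ih, Bool.true_and]
          rw [filterMap_guard_map_pair r l₂]
          simp [guard', List.filterMap_cons]

private lemma any_guard (l : List (List ℤ × Bool)) :
    l.any (fun rb => rb.2) = !(l.filterMap guard').isEmpty := by
  induction l with
  | nil => rfl
  | cons rb t ih =>
      rcases rb with ⟨r, b⟩
      cases b <;> simp_all [guard', List.filterMap_cons]

mutual
  theorem Table.red_correct (D : Table) (env : ℕ → ℤ) (stk : List (List ℤ)) :
      (D.red env stk).filterMap guard' = D.eval env stk := by
    cases D with
    | input rows =>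
        rw [Table.red, Table.eval]
        induction rows with
        | nil => rfl
        | cons r t ih => simp_all [guard', List.filterMap_cons]
    | sel F D =>
        have hD := Table.red_correct D env stk
        have hF : ∀ r : List ℤ, F.red env (r :: stk) = F.eval env (r :: stk) :=
          fun r => Formula.red_correct F env (r :: stk)
        rw [Table.red, Table.eval,
          filterMap_guard_map_sel (D.red env stk) (fun r => F.red env (r :: stk)), hD]
        exact List.filter_congr (fun r _ => hF r)
    | prod D₁ D₂ =>
        have h1 := Table.red_correct D₁ env stk
        have h2 := Table.red_correct D₂ env stk
        rw [Table.red, Table.eval, filterMap_guard_prod, h1, h2]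
    | union D₁ D₂ =>
        have h1 := Table.red_correct D₁ env stk
        have h2 := Table.red_correct D₂ env stk
        rw [Table.red, Table.eval, List.filterMap_append, h1, h2]

  theorem Formula.red_correct (F : Formula) (env : ℕ → ℤ) (stk : List (List ℤ)) :
      F.red env stk = F.eval env stk := by
    cases F with
    | le t₁ t₂ => rw [Formula.red, Formula.eval]
    | nonempty D =>
        have hD := Table.red_correct D env stk
        rw [Formula.red, Formula.eval, any_guard, hD]
    | not F =>
        have hF := Formula.red_correct F env stk
        rw [Formula.red, Formula.eval, hF]
    | or F₁ F₂ =>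
        have h1 := Formula.red_correct F₁ env stk
        have h2 := Formula.red_correct F₂ env stk
        rw [Formula.red, Formula.eval, h1, h2]
end

end DLogic

/-- For any D-formula `F`, the QFLIA formula `⟦F⟧` produced
by the recursive guarded-row reduction is equivalent to `F`: an integer
assignment satisfies `F` under the intended table semantics iff it satisfies
`⟦F⟧`. -/
theorem DLogic.reduction_equivalent (F : DLogic.Formula) (env : ℕ → ℤ) :
    F.red env [] = true ↔ F.eval env [] = true := by
  rw [DLogic.Formula.red_correct]
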